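/- arXiv:math/0604352 — 2 statements merged into one kernel-verified Lean document; each statement's English description precedes it below -/
import Mathlib

section
/- Fix β ≥ 0 and h ∈ ℝ, and let σ be drawn from the Curie-Weiss Gibbs measure on {-1,1}^n given by P({σ}) = Z^{-1} exp((β/n) Σ_{i<j} σ_i σ_j + β h Σ_i σ_i). Let m := (1/n) Σ_{i=1}^n σ_i and for each i let m_i := (1/n) Σ_{j ≠ i} σ_j. Then for every t ≥ 0, P(|m - (1/n) Σ_{i=1}^n tanh(β m_i + β h)| ≥ t/√n) ≤ 2 exp(-t² / (4(1 + β))). -/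
open Finset


lemma cw_exp_aux (x : ℝ) (hx : 0 ≤ x) : Real.exp x - 1 ≤ x * (Real.exp x + 1) / 2 := by
  have key : ∀ y : ℝ, Real.exp y - 1 ≤ y * Real.exp y := by
    intro y
    have h1 := Real.add_one_le_exp (-y)
    have h2 : Real.exp (-y) * Real.exp y = 1 := by
      rw [← Real.exp_add]; simp
    nlinarith [Real.exp_pos y]
  set g : ℝ → ℝ := fun y => y * (Real.exp y + 1) / 2 - (Real.exp y - 1) with hg
  have hder : ∀ y : ℝ, HasDerivAt g ((Real.exp y + 1 + y * Real.exp y) / 2 - Real.exp y) y := by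
    intro y
    have h1 : HasDerivAt (fun y : ℝ => y * (Real.exp y + 1)) (Real.exp y + 1 + y * Real.exp y) y := by
      have := (hasDerivAt_id y).fun_mul ((Real.hasDerivAt_exp y).add_const 1)
      simpa [mul_comm] using this
    exact (h1.div_const 2).sub ((Real.hasDerivAt_exp y).sub_const 1)
  have hmono : MonotoneOn g (Set.Ici (0:ℝ)) := by
    apply monotoneOn_of_deriv_nonneg (convex_Ici 0)
    · exact fun y _ => ((hder y).continuousAt).continuousWithinAt
    · intro y hy
      exact ((hder y).differentiableAt).differentiableWithinAt
    · intro y hy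
      rw [(hder y).deriv]
      simp only [Set.mem_Ioi, interior_Ici] at hy
      have := key y
      nlinarith [Real.exp_pos y, hy.le]
  have h0 : g 0 ≤ g x := hmono (le_refl (0:ℝ)) hx hx
  simp [hg] at h0
  linarith

lemma cw_abs_exp_sub (a b : ℝ) :
    |Real.exp a - Real.exp b| ≤ |a - b| * (Real.exp a + Real.exp b) / 2 := by
  wlog hab : b ≤ a with H
  · have := H b a (le_of_not_ge hab)
    rw [abs_sub_comm] at this
    rw [abs_sub_comm a b]
    linarith [this]
  have hx : (0:ℝ) ≤ a - b := by linarith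
  have h1 := cw_exp_aux (a - b) hx
  have h2 : Real.exp a = Real.exp b * Real.exp (a - b) := by
    rw [← Real.exp_add]; ring_nf
  have hb := Real.exp_pos b
  have ha := Real.exp_pos a
  have habs1 : |Real.exp a - Real.exp b| = Real.exp a - Real.exp b := by
    rw [abs_of_nonneg]; have := Real.exp_le_exp.mpr hab; linarith
  have habs2 : |a - b| = a - b := abs_of_nonneg hx
  rw [habs1, habs2, h2]
  nlinarith [Real.exp_pos (a-b)]

lemma cw_tanh_lipschitz (a b : ℝ) : |Real.tanh a - Real.tanh b| ≤ |a - b| := by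
  have hder : ∀ y : ℝ, HasDerivAt Real.tanh (1 / Real.cosh y ^ 2) y := by
    intro y
    have hc := Real.cosh_pos y
    have h := (Real.hasDerivAt_sinh y).fun_div (Real.hasDerivAt_cosh y) hc.ne'
    have heq : (Real.cosh y * Real.cosh y - Real.sinh y * Real.sinh y) / Real.cosh y ^ 2
        = 1 / Real.cosh y ^ 2 := by
      rw [show Real.cosh y * Real.cosh y - Real.sinh y * Real.sinh y
          = Real.cosh y ^ 2 - Real.sinh y ^ 2 by ring, Real.cosh_sq_sub_sinh_sq]
    rw [heq] at h
    have : Real.tanh = fun y => Real.sinh y / Real.cosh y := by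
      funext z; exact Real.tanh_eq_sinh_div_cosh z
    rw [this]
    simpa using h
  have := Convex.norm_image_sub_le_of_norm_hasDerivWithin_le
    (f := Real.tanh) (f' := fun y => 1 / Real.cosh y ^ 2) (C := 1) (s := Set.univ)
    (fun y _ => (hder y).hasDerivWithinAt)
    (fun y _ => by
      have h1 := Real.one_le_cosh y
      rw [Real.norm_eq_abs, abs_of_nonneg (by positivity)]
      rw [div_le_one (by positivity)]
      nlinarith)
    convex_univ (Set.mem_univ b) (Set.mem_univ a)
  simpa [Real.norm_eq_abs] using this

lemma cw_mgf_bound {Ω : Type*} [Fintype Ω] (p f : Ω → ℝ)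
    (hp1 : ∑ s, p s = 1) (c : ℝ) (hc : 0 < c)
    (hd : ∀ l : ℝ, |∑ s, p s * (f s * Real.exp (l * f s))|
      ≤ c * |l| * ∑ s, p s * Real.exp (l * f s)) :
    ∀ l : ℝ, ∑ s, p s * Real.exp (l * f s) ≤ Real.exp (c * l ^ 2 / 2) := by
  set φ : ℝ → ℝ := fun l => ∑ s, p s * Real.exp (l * f s) with hφ
  set D : ℝ → ℝ := fun l => ∑ s, p s * (f s * Real.exp (l * f s)) with hD
  have hφd : ∀ l : ℝ, HasDerivAt φ (D l) l := by
    intro l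
    apply HasDerivAt.fun_sum
    intro s _
    have h1 : HasDerivAt (fun l : ℝ => l * f s) (f s) l := hasDerivAt_mul_const (f s)
    have h2 := (h1.exp).const_mul (p s)
    simpa [mul_comm, mul_assoc, mul_left_comm] using h2
  set ψ : ℝ → ℝ := fun l => φ l * Real.exp (-(c * l ^ 2 / 2)) with hψ
  have hψd : ∀ l : ℝ, HasDerivAt ψ ((D l - c * l * φ l) * Real.exp (-(c * l ^ 2 / 2))) l := by
    intro l
    have h1 : HasDerivAt (fun l : ℝ => -(c * l ^ 2 / 2)) (-(c * l)) l := by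
      have := ((hasDerivAt_pow 2 l).const_mul c).div_const 2 |>.fun_neg
      simpa using this.congr_deriv (by ring)
    have h2 := (hφd l).mul h1.exp
    apply h2.congr_deriv
    ring
  have hkey : ∀ l : ℝ, ψ l ≤ ψ 0 := by
    have hψ0 : ∀ l : ℝ, 0 ≤ l → ψ l ≤ ψ 0 := by
      intro l hl
      have hmono : AntitoneOn ψ (Set.Ici (0:ℝ)) := by
        apply antitoneOn_of_deriv_nonpos (convex_Ici 0)
        · exact fun y _ => ((hψd y).continuousAt).continuousWithinAt
        · exact fun y _ => ((hψd y).differentiableAt).differentiableWithinAt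
        · intro y hy
          rw [interior_Ici] at hy
          rw [(hψd y).deriv]
          have h3 : |D y| ≤ c * |y| * φ y := hd y
          have h4 : D y ≤ c * y * φ y := by
            have : |y| = y := abs_of_nonneg (le_of_lt hy)
            calc D y ≤ |D y| := le_abs_self _
            _ ≤ c * |y| * φ y := h3
            _ = c * y * φ y := by rw [this]
          have := Real.exp_pos (-(c * y ^ 2 / 2))
          nlinarith
      exact hmono (Set.mem_Ici.mpr le_rfl) (Set.mem_Ici.mpr hl) hl
    have hψ1 : ∀ l : ℝ, l ≤ 0 → ψ l ≤ ψ 0 := by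
      intro l hl
      have hmono : MonotoneOn ψ (Set.Iic (0:ℝ)) := by
        apply monotoneOn_of_deriv_nonneg (convex_Iic 0)
        · exact fun y _ => ((hψd y).continuousAt).continuousWithinAt
        · exact fun y _ => ((hψd y).differentiableAt).differentiableWithinAt
        · intro y hy
          rw [interior_Iic] at hy
          rw [(hψd y).deriv]
          have h3 : |D y| ≤ c * |y| * φ y := hd y
          have h4 : c * y * φ y ≤ D y := by
            have hay : |y| = -y := abs_of_nonpos (le_of_lt hy)
            rw [hay] at h3
            have h5 := neg_abs_le (D y)
            have h6 : c * y * φ y = -(c * -y * φ y) := by ring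
            linarith
          have := Real.exp_pos (-(c * y ^ 2 / 2))
          nlinarith
      exact hmono (Set.mem_Iic.mpr hl) (Set.mem_Iic.mpr le_rfl) hl
    intro l
    rcases le_or_gt 0 l with h | h
    · exact hψ0 l h
    · exact hψ1 l h.le
  intro l
  have h0 : ψ 0 = 1 := by
    simp [hψ, hφ, hp1]
  have := hkey l
  rw [h0] at this
  have hE := Real.exp_pos (-(c * l ^ 2 / 2))
  have : φ l ≤ 1 / Real.exp (-(c * l ^ 2 / 2)) := by
    rw [le_div_iff₀ hE]
    simpa [hψ] using this
  calc φ l ≤ 1 / Real.exp (-(c * l ^ 2 / 2)) := this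
  _ = Real.exp (c * l ^ 2 / 2) := by
    rw [Real.exp_neg]; field_simp

lemma cw_chernoff {Ω : Type*} [Fintype Ω] [DecidableEq Ω] (p f : Ω → ℝ) (hp : ∀ s, 0 ≤ p s)
    (hp1 : ∑ s, p s = 1) (c : ℝ) (hc : 0 < c)
    (hmgf : ∀ l : ℝ, ∑ s, p s * Real.exp (l * f s) ≤ Real.exp (c * l ^ 2 / 2))
    (x : ℝ) (hx : 0 ≤ x) :
    ∑ s ∈ univ.filter (fun s => x ≤ |f s|), p s ≤ 2 * Real.exp (-x ^ 2 / (2 * c)) := by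
  set l := x / c with hl
  have hl0 : 0 ≤ l := div_nonneg hx hc.le
  have hexp : c * l ^ 2 / 2 - l * x = -x ^ 2 / (2 * c) := by
    field_simp [hl]
    have hcl : c * l = x := by rw [hl]; field_simp
    linear_combination (c * l - x) * hcl
  -- upper tail
  have tail : ∀ ε : ℝ, ε = 1 ∨ ε = -1 →
      ∑ s ∈ univ.filter (fun s => x ≤ ε * f s), p s ≤ Real.exp (-x ^ 2 / (2 * c)) := by
    intro ε hε
    have step1 : ∑ s ∈ univ.filter (fun s => x ≤ ε * f s), p s
        ≤ ∑ s ∈ univ.filter (fun s => x ≤ ε * f s), p s * Real.exp (l * ε * f s - l * x) := by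
      apply Finset.sum_le_sum
      intro s hs
      rw [Finset.mem_filter] at hs
      have h1 : 0 ≤ l * ε * f s - l * x := by
        have := mul_le_mul_of_nonneg_left hs.2 hl0
        nlinarith
      have h2 : 1 ≤ Real.exp (l * ε * f s - l * x) := by
        rw [show (1:ℝ) = Real.exp 0 by simp]
        exact Real.exp_le_exp.mpr h1
      nlinarith [hp s]
    have step2 : ∑ s ∈ univ.filter (fun s => x ≤ ε * f s), p s * Real.exp (l * ε * f s - l * x)
        ≤ ∑ s, p s * Real.exp ((l * ε) * f s - l * x) := by
      apply Finset.sum_le_sum_of_subset_of_nonneg (Finset.filter_subset _ _)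
      intro s _ _
      have := Real.exp_pos ((l * ε) * f s - l * x)
      nlinarith [hp s]
    have step3 : ∑ s, p s * Real.exp ((l * ε) * f s - l * x)
        = Real.exp (-(l * x)) * ∑ s, p s * Real.exp ((l * ε) * f s) := by
      rw [Finset.mul_sum]
      apply Finset.sum_congr rfl
      intro s _
      rw [show (l * ε) * f s - l * x = -(l * x) + (l * ε) * f s by ring, Real.exp_add]
      ring
    have step4 : ∑ s, p s * Real.exp ((l * ε) * f s) ≤ Real.exp (c * (l * ε) ^ 2 / 2) :=
      hmgf (l * ε)
    have hε2 : ε ^ 2 = 1 := by rcases hε with h | h <;> rw [h] <;> norm_num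
    have step5 : Real.exp (-(l * x)) * Real.exp (c * (l * ε) ^ 2 / 2)
        = Real.exp (-x ^ 2 / (2 * c)) := by
      rw [← Real.exp_add]
      congr 1
      rw [mul_pow, hε2]
      linarith [hexp]
    calc ∑ s ∈ univ.filter (fun s => x ≤ ε * f s), p s
        ≤ ∑ s ∈ univ.filter (fun s => x ≤ ε * f s), p s * Real.exp (l * ε * f s - l * x) := step1
      _ ≤ ∑ s, p s * Real.exp ((l * ε) * f s - l * x) := by
          have : ∀ s : Ω, l * ε * f s - l * x = (l * ε) * f s - l * x := fun s => by ring
          simpa [this] using step2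
      _ = Real.exp (-(l * x)) * ∑ s, p s * Real.exp ((l * ε) * f s) := step3
      _ ≤ Real.exp (-(l * x)) * Real.exp (c * (l * ε) ^ 2 / 2) := by
          apply mul_le_mul_of_nonneg_left step4 (Real.exp_pos _).le
      _ = Real.exp (-x ^ 2 / (2 * c)) := step5
  have hsub : univ.filter (fun s => x ≤ |f s|) ⊆
      univ.filter (fun s : Ω => x ≤ 1 * f s) ∪ univ.filter (fun s : Ω => x ≤ (-1) * f s) := by
    intro s hs
    rw [Finset.mem_filter] at hs
    rw [Finset.mem_union, Finset.mem_filter, Finset.mem_filter]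
    rcases abs_cases (f s) with ⟨h1, _⟩ | ⟨h1, _⟩
    · left; constructor; · exact Finset.mem_univ s
      rw [one_mul, ← h1]; exact hs.2
    · right; constructor; · exact Finset.mem_univ s
      rw [neg_one_mul, ← h1]; exact hs.2
  calc ∑ s ∈ univ.filter (fun s => x ≤ |f s|), p s
      ≤ ∑ s ∈ (univ.filter (fun s : Ω => x ≤ 1 * f s) ∪ univ.filter (fun s : Ω => x ≤ (-1) * f s)), p s := by
        apply Finset.sum_le_sum_of_subset_of_nonneg hsub
        intro s _ _; exact hp s
    _ ≤ ∑ s ∈ univ.filter (fun s : Ω => x ≤ 1 * f s), p s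
        + ∑ s ∈ univ.filter (fun s : Ω => x ≤ (-1) * f s), p s := by
        have h := Finset.sum_union_inter (s₁ := univ.filter (fun s : Ω => x ≤ 1 * f s))
          (s₂ := univ.filter (fun s : Ω => x ≤ (-1) * f s)) (f := p)
        have hnn : 0 ≤ ∑ s ∈ (univ.filter (fun s : Ω => x ≤ 1 * f s) ∩ univ.filter (fun s : Ω => x ≤ (-1) * f s)), p s :=
          Finset.sum_nonneg (fun s _ => hp s)
        linarith
    _ ≤ Real.exp (-x ^ 2 / (2 * c)) + Real.exp (-x ^ 2 / (2 * c)) := by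
        gcongr
        · exact tail 1 (Or.inl rfl)
        · exact tail (-1) (Or.inr rfl)
    _ = 2 * Real.exp (-x ^ 2 / (2 * c)) := by ring

lemma cw_pair_split (n : ℕ) (i : Fin n) (F : Fin n → ℝ) :
    ∑ p ∈ Finset.univ.filter (fun p : Fin n × Fin n => p.1 < p.2), F p.1 * F p.2
    = (∑ p ∈ Finset.univ.filter
        (fun p : Fin n × Fin n => p.1 < p.2 ∧ p.1 ≠ i ∧ p.2 ≠ i), F p.1 * F p.2)
      + F i * ∑ j ∈ Finset.univ.filter (fun j => j ≠ i), F j := by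
  classical
  set P := Finset.univ.filter (fun p : Fin n × Fin n => p.1 < p.2) with hP
  have hsplit := Finset.sum_filter_add_sum_filter_not P
    (fun p : Fin n × Fin n => p.1 ≠ i ∧ p.2 ≠ i) (fun p => F p.1 * F p.2)
  have h1 : P.filter (fun p : Fin n × Fin n => p.1 ≠ i ∧ p.2 ≠ i)
      = Finset.univ.filter (fun p : Fin n × Fin n => p.1 < p.2 ∧ p.1 ≠ i ∧ p.2 ≠ i) := by
    rw [hP, Finset.filter_filter]
  have h2 : ∑ p ∈ P.filter (fun p : Fin n × Fin n => ¬(p.1 ≠ i ∧ p.2 ≠ i)), F p.1 * F p.2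
      = ∑ j ∈ Finset.univ.filter (fun j => j ≠ i), F i * F j := by
    apply Finset.sum_nbij' (i := fun p : Fin n × Fin n => if p.1 = i then p.2 else p.1)
      (j := fun j : Fin n => if i < j then ((i, j) : Fin n × Fin n) else (j, i))
    · intro p hp
      rw [Finset.mem_filter] at hp
      obtain ⟨hpP, hpi⟩ := hp
      rw [hP, Finset.mem_filter] at hpP
      push_neg at hpi
      rw [Finset.mem_filter]
      refine ⟨Finset.mem_univ _, ?_⟩
      by_cases hc : p.1 = i
      · simp only [hc, if_true]
        intro hcon; rw [hcon, ← hc] at hpP; exact absurd hpP.2 (lt_irrefl _)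
      · simp only [hc, if_false]; exact hc
    · intro j hj
      rw [Finset.mem_filter] at hj
      rw [Finset.mem_filter, hP]
      by_cases hc : i < j
      · simp only [hc, if_true]
        refine ⟨Finset.mem_filter.mpr ⟨Finset.mem_univ _, hc⟩, ?_⟩
        push_neg; intro hcon; exact absurd rfl hcon
      · have hlt : j < i := lt_of_le_of_ne (le_of_not_gt hc) hj.2
        simp only [hc, if_false]
        refine ⟨Finset.mem_filter.mpr ⟨Finset.mem_univ _, hlt⟩, ?_⟩
        push_neg; intro _; exact rfl
    · intro p hp
      rw [Finset.mem_filter] at hp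
      obtain ⟨hpP, hpi⟩ := hp
      rw [hP, Finset.mem_filter] at hpP
      push_neg at hpi
      by_cases hc : p.1 = i
      · simp only [hc, if_true]
        have : i < p.2 := hc ▸ hpP.2
        simp only [this, if_true]
        exact Prod.ext hc.symm rfl
      · have hp2 : p.2 = i := hpi (fun hh => absurd hh hc)
        simp only [hc, if_false]
        have : ¬ i < p.1 := by rw [← hp2]; exact not_lt.mpr (le_of_lt hpP.2)
        simp only [this, if_false]
        exact Prod.ext rfl hp2.symm
    · intro j hj
      rw [Finset.mem_filter] at hj
      by_cases hc : i < j
      · simp only [hc, if_true]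
      · simp only [hc, if_false]
        have : j ≠ i := hj.2
        simp [this]
    · intro p hp
      rw [Finset.mem_filter] at hp
      obtain ⟨hpP, hpi⟩ := hp
      push_neg at hpi
      by_cases hc : p.1 = i
      · simp only [hc, if_true]
      · have hp2 : p.2 = i := hpi (fun hh => absurd hh hc)
        simp only [hc, if_false]; rw [hp2]; ring
  rw [← hsplit, h1, h2, Finset.mul_sum]

-- update invariance of sums not involving i
lemma cw_w_update (n : ℕ) (β h : ℝ)
    (σ : (Fin n → Bool) → Fin n → ℝ)
    (hσ : ∀ s i, σ s i = if s i then 1 else -1)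
    (w : (Fin n → Bool) → ℝ)
    (hw : ∀ s, w s = Real.exp (β / n *
        (∑ p ∈ Finset.univ.filter (fun p : Fin n × Fin n => p.1 < p.2), σ s p.1 * σ s p.2)
      + β * h * ∑ i, σ s i))
    (mi : (Fin n → Bool) → Fin n → ℝ)
    (hmi : ∀ s i, mi s i = (1 / n) * ∑ j ∈ Finset.univ.filter (fun j => j ≠ i), σ s j)
    (s : Fin n → Bool) (i : Fin n) :
    ∃ E : ℝ, 0 < E ∧ ∀ b : Bool,
      w (Function.update s i b)
        = E * Real.exp ((if b then (1:ℝ) else -1) * (β * mi s i + β * h)) := by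
  classical
  set A := ∑ p ∈ Finset.univ.filter
      (fun p : Fin n × Fin n => p.1 < p.2 ∧ p.1 ≠ i ∧ p.2 ≠ i), σ s p.1 * σ s p.2 with hA
  set B := ∑ j ∈ Finset.univ.filter (fun j => j ≠ i), σ s j with hB
  refine ⟨Real.exp (β / n * A + β * h * B), Real.exp_pos _, ?_⟩
  intro b
  set s' := Function.update s i b with hs'
  have hσeq : ∀ j, j ≠ i → σ s' j = σ s j := by
    intro j hj
    rw [hσ, hσ, hs', Function.update_of_ne hj]
  have hσi : σ s' i = if b then (1:ℝ) else -1 := by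
    rw [hσ, hs', Function.update_self]
  -- sums over j ≠ i agree
  have hBeq : ∑ j ∈ Finset.univ.filter (fun j => j ≠ i), σ s' j = B := by
    rw [hB]
    exact Finset.sum_congr rfl (fun j hj => hσeq j (Finset.mem_filter.mp hj).2)
  -- pair sums with both coords ≠ i agree
  have hAeq : ∑ p ∈ Finset.univ.filter
      (fun p : Fin n × Fin n => p.1 < p.2 ∧ p.1 ≠ i ∧ p.2 ≠ i), σ s' p.1 * σ s' p.2 = A := by
    rw [hA]
    refine Finset.sum_congr rfl (fun p hp => ?_)
    obtain ⟨-, -, h1, h2⟩ := Finset.mem_filter.mp hp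
    rw [hσeq p.1 h1, hσeq p.2 h2]
  -- total sum split
  have hTot : ∑ j, σ s' j = σ s' i + B := by
    rw [← hBeq]
    rw [show Finset.univ.filter (fun j => j ≠ i) = Finset.univ.erase i from Finset.filter_ne' _ _]
    exact (Finset.add_sum_erase Finset.univ (σ s') (Finset.mem_univ i)).symm
  -- pair sum split
  have hPair : ∑ p ∈ Finset.univ.filter (fun p : Fin n × Fin n => p.1 < p.2),
      σ s' p.1 * σ s' p.2 = A + σ s' i * B := by
    rw [cw_pair_split n i (σ s'), hAeq, hBeq]
  have hmiB : mi s i = (1 / n) * B := by rw [hmi, hB]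
  rw [hw, hTot, hPair, ← Real.exp_add]
  congr 1
  rw [hmiB]
  have hn0 : (n : ℝ) ≠ 0 := by
    have := i.pos
    simp only [ne_eq, Nat.cast_eq_zero]
    omega
  rw [hσi]
  cases b <;> field_simp <;> ring

lemma cw_tanh_of_decomp (x E Wt Wf : ℝ) (hE : 0 < E)
    (ht : Wt = E * Real.exp (1 * x)) (hf : Wf = E * Real.exp ((-1) * x)) :
    Real.tanh x * (Wt + Wf) = Wt - Wf := by
  rw [ht, hf, Real.tanh_eq_sinh_div_cosh, Real.sinh_eq, Real.cosh_eq]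
  have hc : Real.exp x + Real.exp (-x) > 0 := by positivity
  rw [one_mul, neg_one_mul]
  field_simp

lemma cw_lip (n : ℕ) (hn : 1 ≤ n) (β h : ℝ) (hβ : 0 ≤ β)
    (σ : (Fin n → Bool) → Fin n → ℝ)
    (hσ : ∀ s i, σ s i = if s i then 1 else -1)
    (m : (Fin n → Bool) → ℝ) (hm : ∀ s, m s = (1 / n) * ∑ i, σ s i)
    (mi : (Fin n → Bool) → Fin n → ℝ)
    (hmi : ∀ s i, mi s i = (1 / n) * ∑ j ∈ Finset.univ.filter (fun j => j ≠ i), σ s j)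
    (f : (Fin n → Bool) → ℝ)
    (hf : ∀ s, f s = m s - (1 / n) * ∑ i, Real.tanh (β * mi s i + β * h))
    (s : Fin n → Bool) (i : Fin n) (b : Bool) :
    |f s - f (Function.update s i b)| ≤ (1 + β) / n * |σ s i - σ (Function.update s i b) i| := by
  classical
  set s' := Function.update s i b with hs'
  set d := σ s i - σ s' i with hd
  have hn0 : (0:ℝ) < n := by positivity
  have hσeq : ∀ j, j ≠ i → σ s' j = σ s j := fun j hj => by
    rw [hσ, hσ, hs', Function.update_of_ne hj]
  have hdiff : ∀ j, σ s j - σ s' j = if j = i then d else 0 := by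
    intro j
    by_cases hc : j = i
    · rw [hc, if_pos rfl, hd]
    · rw [if_neg hc, hσeq j hc]; ring
  -- (i) m difference
  have hmd : m s - m s' = (1 / n) * d := by
    rw [hm, hm, ← mul_sub, ← Finset.sum_sub_distrib]
    congr 1
    rw [Finset.sum_congr rfl (fun j _ => hdiff j), Finset.sum_ite_eq' univ i (fun _ => d)]
    simp
  -- (ii) mi differences
  have hmid : ∀ j, |mi s j - mi s' j| ≤ (1 / n) * |d| := by
    intro j
    rw [hmi, hmi, ← mul_sub, ← Finset.sum_sub_distrib]
    by_cases hc : j = i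
    · have : ∑ k ∈ Finset.univ.filter (fun k => k ≠ j), (σ s k - σ s' k) = 0 := by
        apply Finset.sum_eq_zero
        intro k hk
        have hki : k ≠ i := hc ▸ (Finset.mem_filter.mp hk).2
        rw [hdiff k, if_neg hki]
      rw [this, mul_zero, abs_zero]
      positivity
    · have : ∑ k ∈ Finset.univ.filter (fun k => k ≠ j), (σ s k - σ s' k) = d := by
        rw [Finset.sum_congr rfl (fun k _ => hdiff k)]
        rw [Finset.sum_ite_eq' (Finset.univ.filter (fun k => k ≠ j)) i (fun _ => d)]
        have : i ∈ Finset.univ.filter (fun k => k ≠ j) := by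
          rw [Finset.mem_filter]
          exact ⟨Finset.mem_univ _, fun hh => hc hh.symm⟩
        rw [if_pos this]
      rw [this, abs_mul]
      gcongr
      rw [abs_of_nonneg (by positivity : (0:ℝ) ≤ 1/(n:ℝ))]
  -- tanh Lipschitz
  have tanh_lip : ∀ a b : ℝ, |Real.tanh a - Real.tanh b| ≤ |a - b| := cw_tanh_lipschitz
  have htanh : ∀ j, |Real.tanh (β * mi s j + β * h) - Real.tanh (β * mi s' j + β * h)|
      ≤ β * ((1/n) * |d|) := by
    intro j
    calc |Real.tanh (β * mi s j + β * h) - Real.tanh (β * mi s' j + β * h)|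
        ≤ |(β * mi s j + β * h) - (β * mi s' j + β * h)| := tanh_lip _ _
      _ = β * |mi s j - mi s' j| := by
          rw [show (β * mi s j + β * h) - (β * mi s' j + β * h) = β * (mi s j - mi s' j) by ring,
            abs_mul, abs_of_nonneg hβ]
      _ ≤ β * ((1/n) * |d|) := by gcongr; exact hmid j
  have hfd : f s - f s' = (m s - m s') - (1/n) * ∑ j, (Real.tanh (β * mi s j + β * h)
      - Real.tanh (β * mi s' j + β * h)) := by
    rw [hf, hf, Finset.sum_sub_distrib]
    ring
  rw [hfd]
  have h1 : |(m s - m s') - (1/n) * ∑ j, (Real.tanh (β * mi s j + β * h)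
      - Real.tanh (β * mi s' j + β * h))|
      ≤ |m s - m s'| + (1/n) * |∑ j, (Real.tanh (β * mi s j + β * h)
      - Real.tanh (β * mi s' j + β * h))| := by
    calc _ ≤ |m s - m s'| + |(1/n) * ∑ j, (Real.tanh (β * mi s j + β * h)
        - Real.tanh (β * mi s' j + β * h))| := abs_sub _ _
      _ = _ := by rw [abs_mul, abs_of_nonneg (by positivity : (0:ℝ) ≤ 1/(n:ℝ))]
  have h2 : |∑ j, (Real.tanh (β * mi s j + β * h) - Real.tanh (β * mi s' j + β * h))|
      ≤ n * (β * ((1/n) * |d|)) := by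
    calc _ ≤ ∑ j, |Real.tanh (β * mi s j + β * h) - Real.tanh (β * mi s' j + β * h)| :=
        Finset.abs_sum_le_sum_abs _ _
      _ ≤ ∑ _j : Fin n, β * ((1/n) * |d|) := Finset.sum_le_sum (fun j _ => htanh j)
      _ = n * (β * ((1/n) * |d|)) := by
          rw [Finset.sum_const, Finset.card_univ, Fintype.card_fin, nsmul_eq_mul]
  have h3 : |m s - m s'| = (1/n) * |d| := by
    rw [hmd, abs_mul, abs_of_nonneg (by positivity : (0:ℝ) ≤ 1/(n:ℝ))]
  have hne : (n:ℝ) ≠ 0 := hn0.ne'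
  calc |(m s - m s') - (1/n) * ∑ j, (Real.tanh (β * mi s j + β * h)
      - Real.tanh (β * mi s' j + β * h))|
      ≤ (1/n) * |d| + (1/n) * (n * (β * ((1/n) * |d|))) := by
        refine le_trans h1 ?_
        rw [h3]
        gcongr
      _ = (1 + β) / n * |d| := by field_simp

set_option maxHeartbeats 2000000 in
lemma cw_deriv_bound (n : ℕ) (hn : 1 ≤ n) (β h : ℝ) (hβ : 0 ≤ β)
    (σ : (Fin n → Bool) → Fin n → ℝ)
    (hσ : ∀ s i, σ s i = if s i then 1 else -1)
    (w : (Fin n → Bool) → ℝ)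
    (hw : ∀ s, w s = Real.exp (β / n *
        (∑ p ∈ Finset.univ.filter (fun p : Fin n × Fin n => p.1 < p.2), σ s p.1 * σ s p.2)
      + β * h * ∑ i, σ s i))
    (m : (Fin n → Bool) → ℝ) (hm : ∀ s, m s = (1 / n) * ∑ i, σ s i)
    (mi : (Fin n → Bool) → Fin n → ℝ)
    (hmi : ∀ s i, mi s i = (1 / n) * ∑ j ∈ Finset.univ.filter (fun j => j ≠ i), σ s j)
    (f : (Fin n → Bool) → ℝ)
    (hf : ∀ s, f s = m s - (1 / n) * ∑ i, Real.tanh (β * mi s i + β * h))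
    (p : (Fin n → Bool) → ℝ)
    (hp : ∀ s, p s = w s / ∑ s', w s')
    (l : ℝ) :
    |∑ s, p s * (f s * Real.exp (l * f s))|
      ≤ (2 * (1 + β) / n) * |l| * ∑ s, p s * Real.exp (l * f s) := by
  classical
  have hnR : (0:ℝ) < n := by
    have h0 : 0 < n := hn
    exact_mod_cast h0
  have hwpos : ∀ s, 0 < w s := fun s => by rw [hw]; exact Real.exp_pos _
  have hZ : (0:ℝ) < ∑ s', w s' := Finset.sum_pos (fun s _ => hwpos s) ⟨_, Finset.mem_univ default⟩
  have hppos : ∀ s, 0 < p s := fun s => by rw [hp]; exact div_pos (hwpos s) hZ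
  set u : (Fin n → Bool) → Fin n → Bool → (Fin n → Bool) :=
    fun s i b => Function.update s i b with hu
  set Dq : (Fin n → Bool) → Fin n → ℝ := fun s i => w (u s i true) + w (u s i false) with hDq
  have hDqpos : ∀ s i, 0 < Dq s i := fun s i => by
    rw [hDq]; exact add_pos (hwpos _) (hwpos _)
  set q : (Fin n → Bool) → Fin n → Bool → ℝ := fun s i b => w (u s i b) / Dq s i with hq
  have hqpos : ∀ s i b, 0 < q s i b := fun s i b => div_pos (hwpos _) (hDqpos s i)
  have hqsum : ∀ s i, q s i true + q s i false = 1 := by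
    intro s i
    rw [hq]
    simp only
    rw [← add_div, hDq]
    exact div_self (hDqpos s i).ne'
  have hqtanh : ∀ s i, q s i true - q s i false = Real.tanh (β * mi s i + β * h) := by
    intro s i
    obtain ⟨E, hE, hEb⟩ := cw_w_update n β h σ hσ w hw mi hmi s i
    have ht : w (u s i true) = E * Real.exp (1 * (β * mi s i + β * h)) := by
      simpa using hEb true
    have hfa : w (u s i false) = E * Real.exp ((-1) * (β * mi s i + β * h)) := by
      simpa using hEb false
    have key := cw_tanh_of_decomp (β * mi s i + β * h) E (w (u s i true)) (w (u s i false))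
      hE ht hfa
    show w (u s i true) / Dq s i - w (u s i false) / Dq s i = _
    rw [div_sub_div_same, div_eq_iff (hDqpos s i).ne']
    have hDqe : Dq s i = w (u s i true) + w (u s i false) := rfl
    rw [hDqe]
    linarith [key]
  -- σ at updated coordinate
  have hσup : ∀ s i (b : Bool), σ (u s i b) i = if b then (1:ℝ) else -1 := by
    intro s i b
    rw [hσ, hu]
    simp only [Function.update_self]
  -- representation of f
  have hfrep : ∀ s, f s = ∑ i, ∑ b, (q s i b / n) * (σ s i - σ (u s i b) i) := by
    intro s
    have inner : ∀ i, ∑ b, (q s i b / n) * (σ s i - σ (u s i b) i)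
        = (1/n) * σ s i - (1/n) * Real.tanh (β * mi s i + β * h) := by
      intro i
      rw [Fintype.sum_bool]
      rw [hσup s i true, hσup s i false, ← hqtanh s i]
      have hs1 : q s i true = 1 - q s i false := by linarith [hqsum s i]
      rw [hs1]
      norm_num
      ring
    rw [Finset.sum_congr rfl (fun i _ => inner i), Finset.sum_sub_distrib, hf, hm,
      Finset.mul_sum, Finset.mul_sum]
  -- the triple space
  set γ := ((Fin n → Bool) × Fin n × Bool) with hγ
  set μ : γ → ℝ := fun x => p x.1 * (q x.1 x.2.1 x.2.2 / n) with hμ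
  have hμpos : ∀ x, 0 ≤ μ x := fun x => by
    rw [hμ]
    exact le_of_lt (mul_pos (hppos _) (div_pos (hqpos _ _ _) hnR))
  set J : γ ≃ γ := {
    toFun := fun x => (u x.1 x.2.1 x.2.2, x.2.1, x.1 x.2.1)
    invFun := fun x => (u x.1 x.2.1 x.2.2, x.2.1, x.1 x.2.1)
    left_inv := by
      intro x
      simp only [hu, Function.update_idem, Function.update_self, Function.update_eq_self]
      rfl
    right_inv := by
      intro x
      simp only [hu, Function.update_idem, Function.update_self, Function.update_eq_self]
      rfl } with hJ
  have hJ1 : ∀ x : γ, (J x).1 = u x.1 x.2.1 x.2.2 := fun x => rfl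
  have hJ21 : ∀ x : γ, (J x).2.1 = x.2.1 := fun x => rfl
  have hJ22 : ∀ x : γ, (J x).2.2 = x.1 x.2.1 := fun x => rfl
  -- μ is J-invariant
  have hJμ : ∀ x : γ, μ (J x) = μ x := by
    rintro ⟨s, i, b⟩
    have hcol : ∀ c : Bool, u (u s i b) i c = u s i c := by
      intro c; rw [hu]; simp only [Function.update_idem]
    have hback : u (u s i b) i (s i) = s := by
      rw [hcol (s i), hu]; simp only [Function.update_eq_self]
    show p (u s i b) * (q (u s i b) i (s i) / n) = p s * (q s i b / n)
    have hqq : q (u s i b) i (s i) = w s / Dq s i := by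
      rw [hq]
      simp only
      rw [hback]
      congr 1
      rw [hDq]
      simp only
      rw [hcol true, hcol false]
    rw [hqq, hq, hp, hp]
    simp only
    rw [hDq]
    field_simp
  -- reindexing identity
  have reindex : ∀ G : γ → ℝ, ∑ x : γ, μ x * G (J x) = ∑ x : γ, μ x * G x := by
    intro G
    have h1 : ∀ x : γ, μ x * G (J x) = μ (J x) * G (J x) := fun x => by rw [hJμ]
    rw [Finset.sum_congr rfl (fun x _ => h1 x)]
    exact Equiv.sum_comp J (fun x => μ x * G x)
  -- marginal identity
  have marginal : ∀ F : (Fin n → Bool) → ℝ, ∑ x : γ, μ x * F x.1 = ∑ s, p s * F s := by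
    intro F
    rw [Fintype.sum_prod_type]
    apply Finset.sum_congr rfl
    intro s _
    rw [Fintype.sum_prod_type]
    have inner : ∀ i : Fin n, ∑ b, μ (s, i, b) * F s = p s * F s / n := by
      intro i
      rw [Fintype.sum_bool]
      show p s * (q s i true / n) * F s + p s * (q s i false / n) * F s = p s * F s / n
      have hs1 : q s i true = 1 - q s i false := by linarith [hqsum s i]
      rw [hs1]
      ring
    rw [Finset.sum_congr rfl (fun i _ => inner i), Finset.sum_const, Finset.card_univ,
      Fintype.card_fin, nsmul_eq_mul]
    field_simp
  -- express T as a sum over triples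
  set g : γ → ℝ := fun x => σ x.1 x.2.1 - σ (u x.1 x.2.1 x.2.2) x.2.1 with hg
  set G : γ → ℝ := fun x => g x * Real.exp (l * f x.1) with hG
  have hT : ∑ s, p s * (f s * Real.exp (l * f s)) = ∑ x : γ, μ x * G x := by
    rw [Fintype.sum_prod_type]
    apply Finset.sum_congr rfl
    intro s _
    rw [Fintype.sum_prod_type]
    have : ∀ i : Fin n, ∑ b, μ (s, i, b) * G (s, i, b)
        = p s * Real.exp (l * f s) * ∑ b, (q s i b / n) * (σ s i - σ (u s i b) i) := by
      intro i
      rw [Finset.mul_sum]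
      apply Finset.sum_congr rfl
      intro b _
      show p s * (q s i b / n) * (g (s, i, b) * Real.exp (l * f s)) = _
      rw [hg]
      ring
    rw [Finset.sum_congr rfl (fun i _ => this i), ← Finset.mul_sum, ← hfrep s]
    ring
  -- antisymmetry
  have hGJ : ∀ x : γ, G (J x) = -(g x * Real.exp (l * f (u x.1 x.2.1 x.2.2))) := by
    rintro ⟨s, i, b⟩
    have hback : u (u s i b) i (s i) = s := by
      rw [hu]; simp only [Function.update_idem, Function.update_eq_self]
    show g (u s i b, i, s i) * Real.exp (l * f (u s i b)) = _
    rw [hg]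
    simp only
    rw [hback]
    ring
  set T := ∑ s, p s * (f s * Real.exp (l * f s)) with hTdef
  have h2T : 2 * T = ∑ x : γ, μ x * (g x * (Real.exp (l * f x.1)
      - Real.exp (l * f (u x.1 x.2.1 x.2.2)))) := by
    have e1 : T = ∑ x : γ, μ x * G x := hT
    have e2 : T = ∑ x : γ, μ x * G (J x) := by rw [reindex]; exact hT
    rw [two_mul]
    nth_rewrite 1 [e1]
    nth_rewrite 1 [e2]
    rw [← Finset.sum_add_distrib]
    apply Finset.sum_congr rfl
    intro x _
    rw [hGJ x, hG]
    ring
  -- the exp-marginal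
  have hφ2 : ∑ x : γ, μ x * Real.exp (l * f (u x.1 x.2.1 x.2.2))
      = ∑ s, p s * Real.exp (l * f s) := by
    have h0 := reindex (fun x => Real.exp (l * f x.1))
    simp only [hJ1] at h0
    rw [h0]
    exact marginal (fun s => Real.exp (l * f s))
  have hφ1 : ∑ x : γ, μ x * Real.exp (l * f x.1) = ∑ s, p s * Real.exp (l * f s) :=
    marginal (fun s => Real.exp (l * f s))
  -- per-term bound
  have hgabs : ∀ x : γ, |g x| ≤ 2 := by
    rintro ⟨s, i, b⟩
    show |σ s i - σ (u s i b) i| ≤ 2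
    have h1 : |σ s i| ≤ 1 := by rw [hσ]; split <;> norm_num
    have h2 : |σ (u s i b) i| ≤ 1 := by rw [hσ]; split <;> norm_num
    calc |σ s i - σ (u s i b) i| ≤ |σ s i| + |σ (u s i b) i| := abs_sub _ _
      _ ≤ 2 := by linarith
  have perterm : ∀ x : γ, |μ x * (g x * (Real.exp (l * f x.1)
      - Real.exp (l * f (u x.1 x.2.1 x.2.2))))|
      ≤ μ x * ((2 * (1 + β) / n) * |l| * (Real.exp (l * f x.1)
        + Real.exp (l * f (u x.1 x.2.1 x.2.2)))) := by
    rintro ⟨s, i, b⟩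
    show |μ (s,i,b) * (g (s,i,b) * (Real.exp (l * f s) - Real.exp (l * f (u s i b))))|
      ≤ μ (s,i,b) * ((2 * (1 + β) / n) * |l| * (Real.exp (l * f s)
        + Real.exp (l * f (u s i b))))
    set s' := u s i b with hs'
    have hlip : |f s - f s'| ≤ (1 + β) / n * |σ s i - σ s' i| := by
      rw [hs']
      exact cw_lip n hn β h hβ σ hσ m hm mi hmi f hf s i b
    have hexp := cw_abs_exp_sub (l * f s) (l * f s')
    have hlf : |l * f s - l * f s'| = |l| * |f s - f s'| := by
      rw [← abs_mul]; congr 1; ring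
    have hE1 := Real.exp_pos (l * f s)
    have hE2 := Real.exp_pos (l * f s')
    have hgx : |g (⟨s, i, b⟩ : γ)| = |σ s i - σ s' i| := by rw [hs']
    have hμx := hμpos (⟨s, i, b⟩ : γ)
    rw [abs_mul (μ (s,i,b)) (g (s,i,b) * (Real.exp (l * f s) - Real.exp (l * f s'))),
      abs_of_nonneg hμx,
      abs_mul (g (s,i,b)) (Real.exp (l * f s) - Real.exp (l * f s'))]
    apply mul_le_mul_of_nonneg_left _ hμx
    rw [hgx]
    have hdd2 : |σ s i - σ s' i| ≤ 2 := by
      have h1 : |σ s i| ≤ 1 := by rw [hσ]; split <;> norm_num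
      have h2 : |σ s' i| ≤ 1 := by rw [hσ]; split <;> norm_num
      calc |σ s i - σ s' i| ≤ |σ s i| + |σ s' i| := abs_sub _ _
        _ ≤ 2 := by linarith
    have hddnn : 0 ≤ |σ s i - σ s' i| := abs_nonneg _
    have hl0 : (0:ℝ) ≤ |l| := abs_nonneg l
    have hEnn : (0:ℝ) ≤ Real.exp (l * f s) + Real.exp (l * f s') := by positivity
    have hA : 0 ≤ (1 + β) / (n:ℝ) * |l| * (Real.exp (l * f s) + Real.exp (l * f s')) := by
      have h7 : (0:ℝ) ≤ (1 + β) / n := div_nonneg (by linarith) hnR.le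
      exact mul_nonneg (mul_nonneg h7 hl0) hEnn
    calc |σ s i - σ s' i| * |Real.exp (l * f s) - Real.exp (l * f s')|
        ≤ |σ s i - σ s' i| * (|l * f s - l * f s'| * (Real.exp (l * f s) + Real.exp (l * f s')) / 2) := by
          apply mul_le_mul_of_nonneg_left hexp hddnn
      _ = |σ s i - σ s' i| * (|l| * |f s - f s'| * (Real.exp (l * f s) + Real.exp (l * f s')) / 2) := by
          rw [hlf]
      _ ≤ |σ s i - σ s' i| * (|l| * ((1 + β) / n * |σ s i - σ s' i|) * (Real.exp (l * f s) + Real.exp (l * f s')) / 2) := by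
          apply mul_le_mul_of_nonneg_left _ hddnn
          have h8 : |l| * |f s - f s'| ≤ |l| * ((1 + β) / n * |σ s i - σ s' i|) :=
            mul_le_mul_of_nonneg_left hlip hl0
          have h9 := mul_le_mul_of_nonneg_right h8 hEnn
          linarith
      _ = ((1 + β) / n * |l| * (Real.exp (l * f s) + Real.exp (l * f s')))
            * (|σ s i - σ s' i| * |σ s i - σ s' i|) / 2 := by
          ring
      _ ≤ ((1 + β) / n * |l| * (Real.exp (l * f s) + Real.exp (l * f s'))) * 4 / 2 := by
          have hd4 : |σ s i - σ s' i| * |σ s i - σ s' i| ≤ 4 := by nlinarith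
          have := mul_le_mul_of_nonneg_left hd4 hA
          linarith
      _ = (2 * (1 + β) / n) * |l| * (Real.exp (l * f s) + Real.exp (l * f s')) := by
          ring
  -- finish
  have habs2T : |2 * T| ≤ (2 * (1 + β) / n) * |l| * (2 * ∑ s, p s * Real.exp (l * f s)) := by
    rw [h2T]
    calc |∑ x : γ, μ x * (g x * (Real.exp (l * f x.1)
        - Real.exp (l * f (u x.1 x.2.1 x.2.2))))|
        ≤ ∑ x : γ, |μ x * (g x * (Real.exp (l * f x.1)
          - Real.exp (l * f (u x.1 x.2.1 x.2.2))))| := Finset.abs_sum_le_sum_abs _ _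
      _ ≤ ∑ x : γ, μ x * ((2 * (1 + β) / n) * |l| * (Real.exp (l * f x.1)
          + Real.exp (l * f (u x.1 x.2.1 x.2.2)))) :=
          Finset.sum_le_sum (fun x _ => perterm x)
      _ = (2 * (1 + β) / n) * |l| * (∑ x : γ, μ x * Real.exp (l * f x.1)
          + ∑ x : γ, μ x * Real.exp (l * f (u x.1 x.2.1 x.2.2))) := by
          have expand : ∀ x : γ, μ x * ((2 * (1 + β) / n) * |l| * (Real.exp (l * f x.1)
              + Real.exp (l * f (u x.1 x.2.1 x.2.2))))
              = (2 * (1 + β) / n) * |l| * (μ x * Real.exp (l * f x.1))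
                + (2 * (1 + β) / n) * |l| * (μ x * Real.exp (l * f (u x.1 x.2.1 x.2.2))) :=
            fun x => by ring
          rw [Finset.sum_congr rfl (fun x _ => expand x), Finset.sum_add_distrib,
            ← Finset.mul_sum, ← Finset.mul_sum]
          ring
      _ = (2 * (1 + β) / n) * |l| * (2 * ∑ s, p s * Real.exp (l * f s)) := by
          rw [hφ1, hφ2]; ring
  have : |2 * T| = 2 * |T| := by rw [abs_mul]; norm_num
  rw [this] at habs2T
  linarith

/-- **Intermediate concentration step in the Curie–Weiss model.**
Configurations are encoded by `s : Fin n → Bool` with spins `σ s i = ±1`, Gibbs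
weight `w s = exp((β/n) ∑_{i<j} σ_i σ_j + β h ∑_i σ_i)`, magnetization
`m s = (1/n) ∑ i, σ s i`, and `mᵢ s = (1/n) ∑_{j ≠ i} σ s j`. Then for all `t ≥ 0`,
`P(|m - (1/n) ∑ i, tanh(β mᵢ + β h)| ≥ t/√n) ≤ 2 exp(-t²/(4(1+β)))`, where the
probability of an event is the Gibbs-weight of the event divided by the total weight. -/
theorem curie_weiss_local_field_concentration
    (n : ℕ) (hn : 1 ≤ n) (β h : ℝ) (hβ : 0 ≤ β)
    (σ : (Fin n → Bool) → Fin n → ℝ)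
    (hσ : ∀ s i, σ s i = if s i then 1 else -1)
    (w : (Fin n → Bool) → ℝ)
    (hw : ∀ s, w s = Real.exp (β / n *
        (∑ p ∈ Finset.univ.filter (fun p : Fin n × Fin n => p.1 < p.2), σ s p.1 * σ s p.2)
      + β * h * ∑ i, σ s i))
    (m : (Fin n → Bool) → ℝ) (hm : ∀ s, m s = (1 / n) * ∑ i, σ s i)
    (mi : (Fin n → Bool) → Fin n → ℝ)
    (hmi : ∀ s i, mi s i = (1 / n) * ∑ j ∈ Finset.univ.filter (fun j => j ≠ i), σ s j)
    (t : ℝ) (ht : 0 ≤ t) :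
    (∑ s ∈ Finset.univ.filter
        (fun s : Fin n → Bool =>
          t / Real.sqrt n ≤ |m s - (1 / n) * ∑ i, Real.tanh (β * mi s i + β * h)|), w s)
      / (∑ s : Fin n → Bool, w s)
      ≤ 2 * Real.exp (-t ^ 2 / (4 * (1 + β))) := by
  classical
  have hwpos : ∀ s, 0 < w s := fun s => by rw [hw]; exact Real.exp_pos _
  have hZ : (0:ℝ) < ∑ s : Fin n → Bool, w s :=
    Finset.sum_pos (fun s _ => hwpos s) ⟨_, Finset.mem_univ default⟩
  have hnR : (0:ℝ) < n := by
    have h0 : 0 < n := hn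
    exact_mod_cast h0
  set p : (Fin n → Bool) → ℝ := fun s => w s / ∑ s' : Fin n → Bool, w s' with hpdef
  have hp : ∀ s, p s = w s / ∑ s' : Fin n → Bool, w s' := fun s => rfl
  set f : (Fin n → Bool) → ℝ :=
    fun s => m s - (1 / n) * ∑ i, Real.tanh (β * mi s i + β * h) with hfdef
  have hf : ∀ s, f s = m s - (1 / n) * ∑ i, Real.tanh (β * mi s i + β * h) := fun s => rfl
  set c : ℝ := 2 * (1 + β) / n with hcdef
  have hc : 0 < c := div_pos (by linarith) hnR
  have hd : ∀ l : ℝ, |∑ s, p s * (f s * Real.exp (l * f s))|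
      ≤ c * |l| * ∑ s, p s * Real.exp (l * f s) :=
    fun l => cw_deriv_bound n hn β h hβ σ hσ w hw m hm mi hmi f hf p hp l
  have hp1 : ∑ s, p s = 1 := by
    rw [hpdef, ← Finset.sum_div]
    exact div_self hZ.ne'
  have hpnn : ∀ s, 0 ≤ p s := fun s => le_of_lt (by rw [hp]; exact div_pos (hwpos s) hZ)
  have hmgf := cw_mgf_bound p f hp1 c hc hd
  have hx : 0 ≤ t / Real.sqrt n := div_nonneg ht (Real.sqrt_nonneg _)
  have hcher := cw_chernoff p f hpnn hp1 c hc hmgf (t / Real.sqrt n) hx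
  have hLHS : (∑ s ∈ Finset.univ.filter
      (fun s : Fin n → Bool => t / Real.sqrt n ≤ |f s|), w s) / (∑ s : Fin n → Bool, w s)
      = ∑ s ∈ Finset.univ.filter (fun s : Fin n → Bool => t / Real.sqrt n ≤ |f s|), p s := by
    rw [Finset.sum_div]
  have hexp : -(t / Real.sqrt n) ^ 2 / (2 * c) = -t ^ 2 / (4 * (1 + β)) := by
    have hs : Real.sqrt n ^ 2 = n := Real.sq_sqrt hnR.le
    have hsne : Real.sqrt n ≠ 0 := by
      intro hcon
      rw [← hs, hcon] at hnR
      norm_num at hnR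
    have hβ1 : (1:ℝ) + β ≠ 0 := by linarith
    rw [hcdef, div_pow, hs]
    field_simp
    ring
  calc (∑ s ∈ Finset.univ.filter
        (fun s : Fin n → Bool => t / Real.sqrt n ≤ |f s|), w s) / (∑ s : Fin n → Bool, w s)
      = ∑ s ∈ Finset.univ.filter (fun s : Fin n → Bool => t / Real.sqrt n ≤ |f s|), p s := hLHS
    _ ≤ 2 * Real.exp (-(t / Real.sqrt n) ^ 2 / (2 * c)) := hcher
    _ = 2 * Real.exp (-t ^ 2 / (4 * (1 + β))) := by rw [hexp]
end

section
/- Let Y_1, …, Y_n be independent real-valued random variables with means μ_i = E(Y_i) and variances σ_i² = Var(Y_i), and suppose there are constants c_1, …, c_n with |Y_i - μ_i| ≤ c_i almost surely for each i. Let X = Σ_{i=1}^n Y_i. Then for every t ≥ 0, P(|X - E(X)| ≥ t) ≤ 2 exp(-t² / Σ_{i=1}^n (c_i² + σ_i²)). -/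
open MeasureTheory

open Real ProbabilityTheory


lemma lem_sinh_le_mul_cosh {x : ℝ} (hx : 0 ≤ x) : Real.sinh x ≤ x * Real.cosh x := by
  have h : MonotoneOn (fun y : ℝ => y * Real.cosh y - Real.sinh y) (Set.Ici 0) := by
    apply monotoneOn_of_deriv_nonneg (convex_Ici 0)
    · fun_prop
    · fun_prop
    · intro y hy
      have hd : HasDerivAt (fun y : ℝ => y * Real.cosh y - Real.sinh y)
          (1 * Real.cosh y + y * Real.sinh y - Real.cosh y) y :=
        ((hasDerivAt_id y).mul (Real.hasDerivAt_cosh y)).sub (Real.hasDerivAt_sinh y)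
      rw [hd.deriv]
      have hy0 : 0 ≤ y := le_of_lt (by simpa using hy)
      have hs : 0 ≤ Real.sinh y := by
        rw [← Real.sinh_zero]; exact Real.sinh_le_sinh.2 hy0
      nlinarith
  have := h (Set.self_mem_Ici) (Set.mem_Ici.2 hx) hx
  simpa using this

lemma lem_cosh_le_exp (x : ℝ) : Real.cosh x ≤ Real.exp (x ^ 2 / 2) := by
  wlog hx : 0 ≤ x with H
  · have := H (-x) (by linarith)
    simpa using this
  have h : AntitoneOn (fun y : ℝ => Real.cosh y * Real.exp (-(y ^ 2 / 2))) (Set.Ici 0) := by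
    apply antitoneOn_of_deriv_nonpos (convex_Ici 0)
    · fun_prop
    · fun_prop
    · intro y hy
      have hy0 : 0 ≤ y := le_of_lt (by simpa using hy)
      have hd2 : HasDerivAt (fun y : ℝ => -(y ^ 2 / 2)) (-y) y := by
        have := ((hasDerivAt_pow 2 y).div_const 2).neg
        simp at this; exact this
      have hd : HasDerivAt (fun y : ℝ => Real.cosh y * Real.exp (-(y ^ 2 / 2)))
          (Real.sinh y * Real.exp (-(y ^ 2 / 2)) + Real.cosh y * (Real.exp (-(y ^ 2 / 2)) * (-y))) y :=
        (Real.hasDerivAt_cosh y).mul (hd2.exp)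
      rw [hd.deriv]
      have h1 : Real.sinh y ≤ y * Real.cosh y := lem_sinh_le_mul_cosh hy0
      nlinarith [Real.exp_pos (-(y ^ 2 / 2)), Real.cosh_pos (x := y)]
  have := h (Set.self_mem_Ici) (Set.mem_Ici.2 hx) hx
  simp only [Real.cosh_zero, one_mul] at this
  rw [Real.exp_neg] at this
  norm_num at this
  have hp := Real.exp_pos (x ^ 2 / 2)
  calc Real.cosh x = Real.cosh x * (Real.exp (x^2/2))⁻¹ * Real.exp (x^2/2) := by
        field_simp
    _ ≤ 1 * Real.exp (x^2/2) := by
        apply mul_le_mul_of_nonneg_right _ hp.le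
        simpa using this
    _ = Real.exp (x^2/2) := by simp


lemma quad_helper (A B β a γ : ℝ) (hAB : A ≤ B)
    (hfA : β + a*A + γ*A^2 - Real.exp A = 0)
    (hfB : β + a*B + γ*B^2 - Real.exp B = 0)
    (hgA : a + 2*γ*A - Real.exp A = 0) :
    ∀ x ∈ Set.Icc A B, Real.exp x ≤ β + a*x + γ*x^2 := by
  set f : ℝ → ℝ := fun x => β + a*x + γ*x^2 - Real.exp x with hf
  set g : ℝ → ℝ := fun x => a + 2*γ*x - Real.exp x with hg
  have hderiv : ∀ x : ℝ, HasDerivAt f (g x) x := by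
    intro x
    have h1 : HasDerivAt (fun x : ℝ => β + a*x + γ*x^2) (a + γ*(2*x)) x := by
      have : HasDerivAt (fun x : ℝ => γ*x^2) (γ*(2*x)) x := by
        simpa using ((hasDerivAt_pow 2 x).const_mul γ)
      have h := (((hasDerivAt_id x).const_mul a).const_add β).add this
      simp at h; exact h
    have := h1.sub (Real.hasDerivAt_exp x)
    exact this.congr_deriv (by simp only [hg]; ring)
  have hcont : Continuous f := by fun_prop
  have hdiff : Differentiable ℝ f := fun x => (hderiv x).differentiableAt
  have hconc : ∀ y z : ℝ, A ≤ y → y ≤ z → A < z →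
      (z-y)/(z-A) * g A + (y-A)/(z-A) * g z ≤ g y := by
    intro y z hAy hyz hAz
    have hzA : 0 < z - A := by linarith
    have h1 : (z-y)/(z-A) + (y-A)/(z-A) = 1 := by field_simp; ring
    have h2 : (z-y)/(z-A) * A + (y-A)/(z-A) * z = y := by
      rw [div_mul_eq_mul_div, div_mul_eq_mul_div, ← add_div, div_eq_iff hzA.ne']
      ring
    have hexp := convexOn_exp.2 (Set.mem_univ A) (Set.mem_univ z)
      (div_nonneg (by linarith) (by linarith) : (0:ℝ) ≤ (z-y)/(z-A))
      (div_nonneg (by linarith) (by linarith) : (0:ℝ) ≤ (y-A)/(z-A)) h1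
    simp only [smul_eq_mul] at hexp
    rw [h2] at hexp
    have expand : (z-y)/(z-A) * g A + (y-A)/(z-A) * g z
        = a * ((z-y)/(z-A) + (y-A)/(z-A)) + 2*γ*((z-y)/(z-A)*A + (y-A)/(z-A)*z)
          - ((z-y)/(z-A) * Real.exp A + (y-A)/(z-A) * Real.exp z) := by
      simp only [hg]; ring
    rw [expand, h1, h2]
    simp only [hg]
    linarith [hexp]
  intro x hx
  obtain ⟨hx1, hx2⟩ := hx
  have key : 0 ≤ f x := by
    by_cases hcase : ∀ y ∈ Set.Icc A x, 0 ≤ g y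
    · have hmono : MonotoneOn f (Set.Icc A x) := by
        apply monotoneOn_of_deriv_nonneg (convex_Icc A x) hcont.continuousOn
          (hdiff.differentiableOn)
        intro y hy
        rw [interior_Icc] at hy
        rw [(hderiv y).deriv]
        exact hcase y (Set.mem_Icc_of_Ioo hy)
      have := hmono (Set.left_mem_Icc.2 hx1) (Set.mem_Icc.2 ⟨hx1, le_refl x⟩) hx1
      simpa [hf, hfA] using this
    · push_neg at hcase
      obtain ⟨y, hy, hgy⟩ := hcase
      have hAy : A < y := by
        rcases lt_or_eq_of_le hy.1 with h | h
        · exact h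
        · exfalso; rw [← h] at hgy; simp only [hg] at hgy; linarith [hgA]
      have hneg : ∀ z ∈ Set.Icc y B, g z ≤ 0 := by
        intro z hz
        rcases lt_or_eq_of_le hz.1 with h | h
        · have hAz : A < z := lt_trans hAy h
          have := hconc y z hAy.le h.le hAz
          have hθ : 0 < (y-A)/(z-A) := by
            apply div_pos <;> linarith
          have hgA0 : g A = 0 := by simp only [hg]; linarith [hgA]
          rw [hgA0, mul_zero, zero_add] at this
          rcases le_or_gt (g z) 0 with h' | h'
          · exact h'
          · exfalso
            have h2' : (0:ℝ) < g y := lt_of_lt_of_le (mul_pos hθ h') this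
            exact absurd h2' (not_lt.2 hgy.le)
        · rw [← h]; exact hgy.le
      have hanti : AntitoneOn f (Set.Icc y B) := by
        apply antitoneOn_of_deriv_nonpos (convex_Icc y B) hcont.continuousOn
          (hdiff.differentiableOn)
        intro z hz
        rw [interior_Icc] at hz
        rw [(hderiv z).deriv]
        exact hneg z (Set.mem_Icc_of_Ioo hz)
      have hyB : y ≤ B := le_trans hy.2 hx2
      have := hanti (Set.mem_Icc.2 ⟨hy.2, hx2⟩) (Set.right_mem_Icc.2 hyB) hx2
      simpa [hf, hfB] using this
  simp only [hf] at key
  linarith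

lemma key_pointwise (c : ℝ) (hc : 0 < c) :
    ∀ x ∈ Set.Icc (-c) c,
      Real.exp x ≤ (Real.cosh c - (Real.sinh c - c*Real.exp (-c))/(2*c^2)*c^2)
        + (Real.sinh c / c) * x + ((Real.sinh c - c*Real.exp (-c))/(2*c^2)) * x^2 := by
  have hc0 : c ≠ 0 := ne_of_gt hc
  apply quad_helper _ _ _ _ _ (by linarith)
  · rw [Real.cosh_eq, Real.sinh_eq]
    field_simp
    ring
  · rw [Real.cosh_eq, Real.sinh_eq]
    field_simp
    ring
  · rw [Real.sinh_eq]
    field_simp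
    ring



lemma mgf_key {Ω : Type*} [MeasurableSpace Ω] (μ : Measure Ω) [IsProbabilityMeasure μ]
    (Z : Ω → ℝ) (hm : Measurable Z) (c : ℝ) (hc : ∀ᵐ ω ∂μ, |Z ω| ≤ c)
    (hmean : ∫ ω, Z ω ∂μ = 0) :
    ∫ ω, Real.exp (Z ω) ∂μ ≤ Real.exp ((c^2 + ∫ ω, (Z ω)^2 ∂μ)/4) := by
  have hc0 : 0 ≤ c := by
    have : (ae μ).NeBot := ae_neBot.2 (IsProbabilityMeasure.ne_zero μ)
    obtain ⟨ω, hω⟩ := hc.exists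
    exact le_trans (abs_nonneg _) hω
  -- integrability facts
  have hZint : Integrable Z μ := by
    refine Integrable.mono' (integrable_const c) hm.aestronglyMeasurable ?_
    filter_upwards [hc] with ω hω using by simpa using hω
  have hZ2int : Integrable (fun ω => (Z ω)^2) μ := by
    refine Integrable.mono' (integrable_const (c^2)) (hm.pow_const 2).aestronglyMeasurable ?_
    filter_upwards [hc] with ω hω
    have h1 : ‖(Z ω)^2‖ = |Z ω|^2 := by rw [Real.norm_eq_abs, abs_pow]
    rw [h1]
    exact pow_le_pow_left₀ (abs_nonneg _) hω 2
  have hexpint : Integrable (fun ω => Real.exp (Z ω)) μ := by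
    refine Integrable.mono' (integrable_const (Real.exp c)) (Real.measurable_exp.comp hm).aestronglyMeasurable ?_
    filter_upwards [hc] with ω hω
    simp only [Real.norm_eq_abs, abs_of_pos (Real.exp_pos _)]
    exact Real.exp_le_exp.2 (le_trans (le_abs_self _) hω)
  rcases eq_or_lt_of_le hc0 with hc0' | hcpos
  · -- c = 0
    have hZ0 : ∀ᵐ ω ∂μ, Z ω = 0 := by
      filter_upwards [hc] with ω hω
      rw [← hc0'] at hω
      exact abs_eq_zero.1 (le_antisymm hω (abs_nonneg _))
    have h1 : ∫ ω, Real.exp (Z ω) ∂μ = 1 := by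
      rw [integral_congr_ae (g := fun _ => (1:ℝ)) (by filter_upwards [hZ0] with ω h using by simp [h])]
      simp
    have h2 : ∫ ω, (Z ω)^2 ∂μ = 0 := by
      rw [integral_congr_ae (g := fun _ => (0:ℝ)) (by filter_upwards [hZ0] with ω h using by simp [h])]
      simp
    rw [h1, h2, ← hc0']
    norm_num
  -- main case c > 0
  set v : ℝ := ∫ ω, (Z ω)^2 ∂μ with hv
  set γ : ℝ := (Real.sinh c - c*Real.exp (-c))/(2*c^2) with hγ
  set β : ℝ := Real.cosh c - γ*c^2 with hβ
  set a : ℝ := Real.sinh c / c with ha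
  have hv0 : 0 ≤ v := integral_nonneg fun ω => sq_nonneg _
  have hvc : v ≤ c^2 := by
    have : ∀ᵐ ω ∂μ, (Z ω)^2 ≤ c^2 := by
      filter_upwards [hc] with ω hω
      nlinarith [abs_nonneg (Z ω), sq_abs (Z ω)]
    calc v ≤ ∫ _ω, c^2 ∂μ := integral_mono_ae hZ2int (integrable_const _) this
      _ = c^2 := by simp
  -- step 1 : ∫ exp Z ≤ β + γ v
  have step1 : ∫ ω, Real.exp (Z ω) ∂μ ≤ β + γ * v := by
    have hpt : ∀ᵐ ω ∂μ, Real.exp (Z ω) ≤ β + a * Z ω + γ * (Z ω)^2 := by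
      filter_upwards [hc] with ω hω
      exact key_pointwise c hcpos (Z ω) (abs_le.1 hω)
    have i1 : Integrable (fun ω => β + a * Z ω) μ := (integrable_const β).add (hZint.const_mul a)
    have i2 : Integrable (fun ω => γ * (Z ω)^2) μ := hZ2int.const_mul γ
    have hint2 : Integrable (fun ω => β + a * Z ω + γ * (Z ω)^2) μ := i1.add i2
    calc ∫ ω, Real.exp (Z ω) ∂μ ≤ ∫ ω, (β + a * Z ω + γ * (Z ω)^2) ∂μ :=
          integral_mono_ae hexpint hint2 hpt
      _ = (∫ ω, (β + a * Z ω) ∂μ) + ∫ ω, γ * (Z ω)^2 ∂μ := integral_add i1 i2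
      _ = β + a * (∫ ω, Z ω ∂μ) + γ * v := by
          rw [integral_add (integrable_const β) (hZint.const_mul a),
            integral_const, integral_const_mul, integral_const_mul]
          simp [hv]
      _ = β + γ * v := by rw [hmean]; ring
  -- auxiliary exponential facts
  set E4 : ℝ := Real.exp (c^2/4) with hE4
  have hcoshle : Real.cosh c ≤ 2*E4 - 1 := by
    have h1 : Real.cosh c = 2 * Real.cosh (c/2)^2 - 1 := by
      have := Real.cosh_two_mul (c/2)
      rw [show 2*(c/2) = c by ring] at this
      linarith [Real.cosh_sq (c/2)]
    have h2 : Real.cosh (c/2) ≤ Real.exp (c^2/8) := by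
      have := lem_cosh_le_exp (c/2)
      rw [show (c/2)^2/2 = c^2/8 by ring] at this
      exact this
    have h3 : Real.exp (c^2/8) * Real.exp (c^2/8) = E4 := by
      rw [← Real.exp_add, hE4]; congr 1; ring
    nlinarith [Real.cosh_pos (x := c/2), Real.exp_pos (c^2/8)]
  have hγ0 : 0 ≤ γ := by
    have h1 := Real.add_one_le_exp (2*c)
    have h2 : Real.exp (2*c) = Real.exp c * Real.exp c := by rw [← Real.exp_add]; ring_nf
    have h3 : Real.exp (-c) = (Real.exp c)⁻¹ := Real.exp_neg c
    rw [hγ, Real.sinh_eq]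
    have hec : 0 < Real.exp c := Real.exp_pos c
    apply div_nonneg _ (by positivity)
    rw [h3]
    have key : 0 ≤ Real.exp c * Real.exp c - 1 - 2*c := by
      rw [← h2]; linarith
    have expand : ((Real.exp c - (Real.exp c)⁻¹)/2 - c*(Real.exp c)⁻¹) * Real.exp c
        = (Real.exp c * Real.exp c - 1 - 2*c)/2 := by
      field_simp
    nlinarith [key, expand, hec]
  have hβE4 : β ≤ E4 := by
    have hβeq : β = (Real.cosh c + (1+c)*Real.exp (-c))/2 := by
      rw [hβ, hγ, Real.cosh_eq, Real.sinh_eq]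
      field_simp
      ring
    have h1 : (1+c)*Real.exp (-c) ≤ 1 := by
      have := Real.add_one_le_exp c
      have h3 : Real.exp (-c) * Real.exp c = 1 := by rw [← Real.exp_add]; simp
      nlinarith [Real.exp_pos (-c)]
    rw [hβeq]
    linarith
  have hcosh2 : β + γ*c^2 ≤ E4 * (1 + c^2/4) := by
    have h1 : β + γ*c^2 = Real.cosh c := by rw [hβ]; ring
    have h2 := Real.add_one_le_exp (-(c^2/4))
    have h3 : Real.exp (-(c^2/4)) * E4 = 1 := by rw [hE4, ← Real.exp_add]; simp
    rw [h1]
    nlinarith [Real.exp_pos (c^2/4)]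
  -- step 2 : β + γ v ≤ E4 * (1 + v/4)
  have step2 : β + γ * v ≤ E4 * (1 + v/4) := by
    nlinarith [mul_le_mul_of_nonneg_left hcosh2 hv0,
      mul_nonneg (sub_nonneg.2 hvc) (sub_nonneg.2 hβE4), pow_pos hcpos 2]
  -- step 3
  have step3 : E4 * (1 + v/4) ≤ Real.exp ((c^2 + v)/4) := by
    have h1 : Real.exp ((c^2+v)/4) = E4 * Real.exp (v/4) := by
      rw [hE4, ← Real.exp_add]; ring_nf
    rw [h1]
    have := Real.add_one_le_exp (v/4)
    nlinarith [Real.exp_pos (c^2/4)]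
  linarith

/-- **Hoeffding-type inequality for sums of bounded independent random variables.**
Let `Y 1, …, Y n` be independent square-integrable random variables with means `μᵢ`
and variances `σᵢ²`, such that `|Yᵢ - μᵢ| ≤ cᵢ` a.s. for each `i`. Then with
`X = ∑ i, Y i`, for every `t ≥ 0`,
`P(|X - E X| ≥ t) ≤ 2 exp(-t² / ∑ i, (cᵢ² + σᵢ²))`. -/
theorem hoeffding_type_inequality
    {Ω : Type*} [MeasurableSpace Ω] (μ : Measure Ω) [IsProbabilityMeasure μ]
    (n : ℕ) (Y : Fin n → Ω → ℝ)
    (hmeas : ∀ i, Measurable (Y i))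
    (hL2 : ∀ i, MemLp (Y i) 2 μ)
    (hindep : ProbabilityTheory.iIndepFun Y μ)
    (μY : Fin n → ℝ) (hμY : ∀ i, μY i = ∫ ω, Y i ω ∂μ)
    (σ2 : Fin n → ℝ) (hσ2 : ∀ i, σ2 i = ProbabilityTheory.variance (Y i) μ)
    (c : Fin n → ℝ) (hc : ∀ i, ∀ᵐ ω ∂μ, |Y i ω - μY i| ≤ c i)
    (t : ℝ) (ht : 0 ≤ t) :
    (μ {ω | t ≤ |(∑ i, Y i ω) - ∑ i, μY i|}).toReal
      ≤ 2 * Real.exp (-t ^ 2 / ∑ i, (c i ^ 2 + σ2 i)) := by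

  classical
  set Z : Fin n → Ω → ℝ := fun i ω => Y i ω - μY i with hZ
  have hmeasZ : ∀ i, Measurable (Z i) := fun i => (hmeas i).sub_const _
  have hindepZ : ProbabilityTheory.iIndepFun Z μ :=
    hindep.comp (fun i => fun x => x - μY i) (fun i => measurable_id.sub_const _)
  have hYint : ∀ i, Integrable (Y i) μ := fun i => (hL2 i).integrable one_le_two
  have hmeanZ : ∀ i, ∫ ω, Z i ω ∂μ = 0 := by
    intro i
    simp only [hZ]
    rw [integral_sub (hYint i) (integrable_const _), integral_const]
    simp [hμY i]
  have hvar : ∀ i, ∫ ω, (Z i ω)^2 ∂μ = σ2 i := by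
    intro i
    rw [hσ2 i, variance_eq_integral (hL2 i).aemeasurable, ← hμY i]
  have hσ2nn : ∀ i, 0 ≤ σ2 i := fun i => (hσ2 i) ▸ variance_nonneg _ μ
  have hane : (ae μ).NeBot := ae_neBot.2 (IsProbabilityMeasure.ne_zero μ)
  set S : ℝ := ∑ i, (c i^2 + σ2 i) with hS
  have hSnn : 0 ≤ S := Finset.sum_nonneg fun i _ => add_nonneg (sq_nonneg _) (hσ2nn i)
  have htriv : (μ {ω | t ≤ |(∑ i, Y i ω) - ∑ i, μY i|}).toReal ≤ 1 := by
    calc (μ {ω | t ≤ |(∑ i, Y i ω) - ∑ i, μY i|}).toReal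
        ≤ (μ Set.univ).toReal :=
          ENNReal.toReal_mono (measure_ne_top _ _) (measure_mono (Set.subset_univ _))
      _ = 1 := by simp
  by_cases hS0 : S = 0
  · rw [hS0]
    norm_num
    linarith
  have hSpos : 0 < S := lt_of_le_of_ne hSnn (Ne.symm hS0)
  set s : ℝ := 2*t/S with hs
  have hs0 : 0 ≤ s := by positivity
  have hint_exp : ∀ (r : ℝ) (i : Fin n), Integrable (fun ω => Real.exp (r * Z i ω)) μ := by
    intro r i
    refine Integrable.mono' (integrable_const (Real.exp (|r| * c i)))
      (Real.measurable_exp.comp ((hmeasZ i).const_mul r)).aestronglyMeasurable ?_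
    filter_upwards [hc i] with ω hω
    rw [Real.norm_eq_abs, abs_of_pos (Real.exp_pos _)]
    apply Real.exp_le_exp.2
    calc r * Z i ω ≤ |r * Z i ω| := le_abs_self _
      _ = |r| * |Z i ω| := abs_mul _ _
      _ ≤ |r| * c i := mul_le_mul_of_nonneg_left hω (abs_nonneg r)
  have hmgf_i : ∀ (r : ℝ) (i : Fin n),
      mgf (Z i) μ r ≤ Real.exp (r^2 * (c i^2 + σ2 i)/4) := by
    intro r i
    have hbound : ∀ᵐ ω ∂μ, |r * Z i ω| ≤ |r| * c i := by
      filter_upwards [hc i] with ω hω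
      rw [abs_mul]
      exact mul_le_mul_of_nonneg_left hω (abs_nonneg r)
    have hmean' : ∫ ω, r * Z i ω ∂μ = 0 := by
      rw [integral_const_mul, hmeanZ i, mul_zero]
    have h := mgf_key μ (fun ω => r * Z i ω) ((hmeasZ i).const_mul r) (|r| * c i) hbound hmean'
    have h2 : ∫ ω, (r * Z i ω)^2 ∂μ = r^2 * σ2 i := by
      simp_rw [mul_pow]
      rw [integral_const_mul, hvar i]
    rw [h2] at h
    have h3 : ((|r| * c i)^2 + r^2 * σ2 i)/4 = r^2*(c i^2 + σ2 i)/4 := by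
      rw [mul_pow, sq_abs]; ring
    rw [h3] at h
    exact h
  have hmgf_sum : ∀ r : ℝ, mgf (∑ i, Z i) μ r ≤ Real.exp (r^2 * S/4) := by
    intro r
    rw [iIndepFun.mgf_sum hindepZ hmeasZ Finset.univ]
    calc ∏ i, mgf (Z i) μ r ≤ ∏ i, Real.exp (r^2*(c i^2 + σ2 i)/4) :=
        Finset.prod_le_prod (fun i _ => mgf_nonneg) (fun i _ => hmgf_i r i)
      _ = Real.exp (∑ i, r^2*(c i^2+σ2 i)/4) := (Real.exp_sum _ _).symm
      _ = Real.exp (r^2*S/4) := by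
          congr 1
          rw [hS, Finset.mul_sum, Finset.sum_div]
  have hW : ∀ ω, (∑ i, Z i) ω = (∑ i, Y i ω) - ∑ i, μY i := by
    intro ω
    rw [Finset.sum_apply]
    exact Finset.sum_sub_distrib _ _
  have hexpeq : Real.exp (-s*t + s^2*S/4) = Real.exp (-t^2/S) := by
    congr 1
    rw [hs]
    field_simp
    ring
  have hup : (μ {ω | t ≤ (∑ i, Z i) ω}).toReal ≤ Real.exp (-t^2/S) := by
    have hint : Integrable (fun ω => Real.exp (s * (∑ i, Z i) ω)) μ :=
      iIndepFun.integrable_exp_mul_sum hindepZ hmeasZ (fun i _ => hint_exp s i)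
    calc (μ {ω | t ≤ (∑ i, Z i) ω}).toReal
        ≤ Real.exp (-s*t) * mgf (∑ i, Z i) μ s := measure_ge_le_exp_mul_mgf t hs0 hint
      _ ≤ Real.exp (-s*t) * Real.exp (s^2*S/4) :=
          mul_le_mul_of_nonneg_left (hmgf_sum s) (Real.exp_pos _).le
      _ = Real.exp (-s*t + s^2*S/4) := (Real.exp_add _ _).symm
      _ = Real.exp (-t^2/S) := hexpeq
  have hdown : (μ {ω | t ≤ -((∑ i, Z i) ω)}).toReal ≤ Real.exp (-t^2/S) := by
    have hint' : Integrable (fun ω => Real.exp (s * (-(∑ i, Z i)) ω)) μ := by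
      have := iIndepFun.integrable_exp_mul_sum (s := Finset.univ) hindepZ hmeasZ (fun i _ => hint_exp (-s) i)
      simp only [Pi.neg_apply, mul_neg]
      simpa [neg_mul] using this
    have h := measure_ge_le_exp_mul_mgf (X := -(∑ i, Z i)) t hs0 hint'
    rw [mgf_neg] at h
    have hset : {ω | t ≤ -((∑ i, Z i) ω)} = {ω | t ≤ (-(∑ i, Z i)) ω} := rfl
    rw [hset]
    calc (μ {ω | t ≤ (-(∑ i, Z i)) ω}).toReal
        ≤ Real.exp (-s*t) * mgf (∑ i, Z i) μ (-s) := h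
      _ ≤ Real.exp (-s*t) * Real.exp ((-s)^2*S/4) :=
          mul_le_mul_of_nonneg_left (hmgf_sum (-s)) (Real.exp_pos _).le
      _ = Real.exp (-s*t + s^2*S/4) := by rw [← Real.exp_add]; ring_nf
      _ = Real.exp (-t^2/S) := hexpeq
  have hsub : {ω | t ≤ |(∑ i, Y i ω) - ∑ i, μY i|} ⊆
      {ω | t ≤ (∑ i, Z i) ω} ∪ {ω | t ≤ -((∑ i, Z i) ω)} := by
    intro ω hω
    rw [Set.mem_setOf_eq, ← hW ω] at hω
    rcases le_abs.1 hω with h | h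
    · exact Or.inl h
    · exact Or.inr h
  calc (μ {ω | t ≤ |(∑ i, Y i ω) - ∑ i, μY i|}).toReal
      ≤ (μ ({ω | t ≤ (∑ i, Z i) ω} ∪ {ω | t ≤ -((∑ i, Z i) ω)})).toReal :=
        ENNReal.toReal_mono (measure_ne_top _ _) (measure_mono hsub)
    _ ≤ (μ {ω | t ≤ (∑ i, Z i) ω} + μ {ω | t ≤ -((∑ i, Z i) ω)}).toReal :=
        ENNReal.toReal_mono (by finiteness) (measure_union_le _ _)
    _ = (μ {ω | t ≤ (∑ i, Z i) ω}).toReal + (μ {ω | t ≤ -((∑ i, Z i) ω)}).toReal :=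
        ENNReal.toReal_add (measure_ne_top _ _) (measure_ne_top _ _)
    _ ≤ Real.exp (-t^2/S) + Real.exp (-t^2/S) := add_le_add hup hdown
    _ = 2 * Real.exp (-t^2/S) := by ring
end
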